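/- Let D(c) ⊆ {+,•}ⁿ be defined recursively by: D applied to a length-1 clan is the singleton of that clan; D((+,c')) = {(+,d') : d' ∈ D(c')}; D((•,c')) = {(•,d') : d' ∈ D(c')} unless n is even and h_{n-1}(c') = n-1, in which case D((•,c')) = {(•,d') : d' ∈ D(c')} ∪ {(+,d') : d' ∈ D(c')}. Then the cardinality of D(c) equals 2^{#J(c)}, where J(c) = {j ∈ {1,...,n-1} : j odd, h_j(c) = j, and c_{n-j} = •}. -/
import Mathlib


/-- A clan of length `n` is a string in `{+, •}ⁿ`, encoded as `Fin n → Bool`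
with `true` representing `+` and `false` representing `•` (a number). -/
abbrev Clan (n : ℕ) := Fin n → Bool

/-- The sequence `h_j` attached to a clan `c = (c₁, …, c_n)`: `h₀ = 0`, and
`h_j = h_{j-1}` if `c_{n-j+1} = •`, `h_j = h_{j-1} + 1` if `c_{n-j+1} = +` and
`h_{j-1} = j - 1`, `h_j = h_{j-1} + 2` if `c_{n-j+1} = +` and `h_{j-1} ≤ j - 2`.
(Indices of `c` are 1-indexed in the informal description; here `c_{n-j+1}`
is the entry of `c : Fin n → Bool` at the 0-indexed position `n - j`.) -/
def hseq (n : ℕ) (c : Clan n) : ℕ → ℕ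
  | 0 => 0
  | j + 1 =>
    let p := hseq n c j
    if hj : n - (j + 1) < n then
      if c ⟨n - (j + 1), hj⟩ = false then p
      else if p = j then p + 1
      else if p + 1 ≤ j then p + 2
      else p
    else p

/-- `J(c)`: the set of odd `j` with `1 ≤ j ≤ n - 1` such that `h_j(c) = j` and
`c_{n-j} = •` (1-indexed), i.e. the entry at 0-indexed position `n - j - 1` is `•`. -/
def Jset (n : ℕ) (c : Clan n) : Set ℕ :=
  {j | j % 2 = 1 ∧ 1 ≤ j ∧ j ≤ n - 1 ∧ hseq n c j = j ∧
    ∀ h : n - j - 1 < n, c ⟨n - j - 1, h⟩ = false}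

/-- The recursively defined set `D(c)` of clans indexing the terms of the
characteristic cycle of `L_c`: for a clan of length `0` (hence for length `1`)
it is the singleton `{c}`; `D((+, c')) = {(+, d') : d' ∈ D(c')}`;
`D((•, c')) = {(•, d') : d' ∈ D(c')}` unless `n` is even and `h_{n-1}(c') = n-1`,
in which case `D((•, c')) = {(•, d') : d' ∈ D(c')} ∪ {(+, d') : d' ∈ D(c')}`. -/
def Dset : (n : ℕ) → Clan n → Set (Clan n)
  | 0, c => {c}
  | n + 1, c =>
    let c' : Clan n := fun i => c i.succ
    if c 0 = true then
      {d | d 0 = true ∧ (fun i : Fin n => d i.succ) ∈ Dset n c'}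
    else if (n + 1) % 2 = 0 ∧ hseq n c' n = n then
      {d | (fun i : Fin n => d i.succ) ∈ Dset n c'}
    else
      {d | d 0 = false ∧ (fun i : Fin n => d i.succ) ∈ Dset n c'}

/-- `N(n)`: the number of clans of length `n` with `J(c) = ∅`, i.e. whose
characteristic cycle is irreducible. -/
noncomputable def Ncount (n : ℕ) : ℕ :=
  {c : Clan n | Jset n c = ∅}.ncard

/-- `N(n, j)`: the number of clans of length `n` with `J(c) = ∅` and `h_n(c) = j`. -/
noncomputable def Ncj (n j : ℕ) : ℕ :=
  {c : Clan n | Jset n c = ∅ ∧ hseq n c n = j}.ncard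

lemma hseq_tail (n : ℕ) (c : Clan (n+1)) : ∀ j, j ≤ n →
    hseq (n+1) c j = hseq n (fun i => c i.succ) j := by
  intro j
  induction j with
  | zero => intro _; rfl
  | succ k ih =>
    intro hj
    have hk : k ≤ n := Nat.le_of_succ_le hj
    have h1 : n + 1 - (k+1) < n + 1 := by omega
    have h2 : n - (k+1) < n := by omega
    have hidx : (⟨n + 1 - (k+1), h1⟩ : Fin (n+1)) = (⟨n - (k+1), h2⟩ : Fin n).succ := by
      ext; simp [Fin.succ]; omega
    rw [hseq, hseq]
    simp only [ih hk, dif_pos h1, dif_pos h2, hidx]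

lemma mem_Jset_succ (n : ℕ) (c : Clan (n+1)) (j : ℕ) :
    j ∈ Jset (n+1) c ↔ (j ∈ Jset n (fun i => c i.succ)) ∨
      (j = n ∧ n % 2 = 1 ∧ hseq n (fun i => c i.succ) n = n ∧ c 0 = false) := by
  constructor
  · rintro ⟨h1, h2, h3, h4, h5⟩
    rcases Nat.lt_or_ge j n with hlt | hge
    case _ =>
      left
      refine ⟨h1, h2, by omega, ?_, ?_⟩
      · rw [← hseq_tail n c j (le_of_lt hlt)]; exact h4
      · intro h
        have h0 : n + 1 - j - 1 < n + 1 := by omega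
        have hidx : (⟨n + 1 - j - 1, h0⟩ : Fin (n+1)) = (⟨n - j - 1, h⟩ : Fin n).succ := by
          ext; simp [Fin.succ]; omega
        have hv := h5 h0
        rw [hidx] at hv
        exact hv
    case _ =>
      right
      have hj : j = n := by omega
      subst hj
      refine ⟨rfl, h1, ?_, ?_⟩
      · rw [← hseq_tail j c j le_rfl]; exact h4
      · have h0 : j + 1 - j - 1 < j + 1 := by omega
        have hz : (⟨j + 1 - j - 1, h0⟩ : Fin (j+1)) = 0 := by ext; simp
        have hv := h5 h0
        rw [hz] at hv
        exact hv
  · rintro (⟨h1, h2, h3, h4, h5⟩ | ⟨hj, h1, h2, h3⟩)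
    · have hlt : j < n := by omega
      refine ⟨h1, h2, by omega, ?_, ?_⟩
      · rw [hseq_tail n c j (le_of_lt hlt)]; exact h4
      · intro h0
        have h : n - j - 1 < n := by omega
        have hidx : (⟨n + 1 - j - 1, h0⟩ : Fin (n+1)) = (⟨n - j - 1, h⟩ : Fin n).succ := by
          ext; simp [Fin.succ]; omega
        rw [hidx]
        exact h5 h
    · subst hj
      refine ⟨h1, by omega, by omega, ?_, ?_⟩
      · rw [hseq_tail j c j le_rfl]; exact h2
      · intro h0
        have hz : (⟨j + 1 - j - 1, h0⟩ : Fin (j+1)) = 0 := by ext; simp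
        rw [hz]; exact h3

lemma Jset_finite (n : ℕ) (c : Clan n) : (Jset n c).Finite :=
  Set.Finite.subset (Set.finite_Iic n) (fun j hj => by
    rcases hj with ⟨_, _, h, _⟩
    simp only [Set.mem_Iic]; omega)

lemma cons_image (n : ℕ) (b : Bool) (S : Set (Clan n)) :
    {d : Clan (n+1) | d 0 = b ∧ (fun i : Fin n => d i.succ) ∈ S} = Fin.cons b '' S := by
  ext d
  constructor
  · rintro ⟨h0, ht⟩
    exact ⟨fun i => d i.succ, ht, by rw [← h0]; exact Fin.cons_self_tail d⟩
  · rintro ⟨e, he, rfl⟩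
    exact ⟨Fin.cons_zero _ _, by simpa using he⟩

lemma cons_inj (n : ℕ) (b : Bool) :
    Function.Injective (fun e : Clan n => (Fin.cons b e : Clan (n+1))) := by
  intro e e' h
  funext i
  have := congrFun h i.succ
  simpa using this

lemma ncard_cons_image (n : ℕ) (b : Bool) (S : Set (Clan n)) :
    {d : Clan (n+1) | d 0 = b ∧ (fun i : Fin n => d i.succ) ∈ S}.ncard = S.ncard := by
  rw [cons_image]
  exact Set.ncard_image_of_injective _ (cons_inj n b)

lemma ncard_tail_mem (n : ℕ) (S : Set (Clan n)) :
    {d : Clan (n+1) | (fun i : Fin n => d i.succ) ∈ S}.ncard = 2 * S.ncard := by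
  have hsplit : {d : Clan (n+1) | (fun i : Fin n => d i.succ) ∈ S} =
      {d : Clan (n+1) | d 0 = true ∧ (fun i : Fin n => d i.succ) ∈ S} ∪
      {d : Clan (n+1) | d 0 = false ∧ (fun i : Fin n => d i.succ) ∈ S} := by
    ext d
    simp only [Set.mem_setOf_eq, Set.mem_union]
    cases hd : d 0 <;> tauto
  rw [hsplit, Set.ncard_union_eq ?_ (Set.toFinite _) (Set.toFinite _),
    ncard_cons_image, ncard_cons_image]
  · ring
  · rw [Set.disjoint_left]
    rintro d ⟨h1, -⟩ ⟨h2, -⟩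
    simp [h1] at h2


/-- The number of terms of the characteristic cycle of `L_c` is `2^{#J(c)}`:
the cardinality of `D(c)` equals `2` raised to the cardinality of `J(c)`. -/
theorem stmt8 (n : ℕ) (c : Clan n) :
    (Dset n c).ncard = 2 ^ (Jset n c).ncard := by
  induction n with
  | zero =>
    have hJ : Jset 0 c = ∅ := by
      ext j; simp only [Jset, Set.mem_setOf_eq, Set.mem_empty_iff_false, iff_false]
      rintro ⟨_, _, h, _⟩; omega
    simp [Dset, hJ]
  | succ n ih =>
    set c' : Clan n := fun i => c i.succ with hc'
    by_cases h0 : c 0 = true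
    · have hD : Dset (n+1) c =
          {d : Clan (n+1) | d 0 = true ∧ (fun i : Fin n => d i.succ) ∈ Dset n c'} := by
        rw [Dset, if_pos h0]
      have hJ : Jset (n+1) c = Jset n c' := by
        ext j
        rw [mem_Jset_succ]
        constructor
        · rintro (h | ⟨_, _, _, hf⟩)
          · exact h
          · rw [h0] at hf; exact absurd hf (by simp)
        · exact Or.inl
      rw [hD, ncard_cons_image, hJ, ih c']
    · have h0' : c 0 = false := by simpa using h0
      by_cases hcond : (n + 1) % 2 = 0 ∧ hseq n c' n = n
      · have hD : Dset (n+1) c =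
            {d : Clan (n+1) | (fun i : Fin n => d i.succ) ∈ Dset n c'} := by
          rw [Dset, if_neg (by simp [h0']), if_pos hcond]
        have hnn : n % 2 = 1 := by omega
        have hJ : Jset (n+1) c = insert n (Jset n c') := by
          ext j
          rw [mem_Jset_succ, Set.mem_insert_iff]
          constructor
          · rintro (h | ⟨rfl, _⟩)
            · exact Or.inr h
            · exact Or.inl rfl
          · rintro (rfl | h)
            · exact Or.inr ⟨rfl, hnn, hcond.2, h0'⟩
            · exact Or.inl h
        have hnotmem : n ∉ Jset n c' := by
          rintro ⟨_, h1, h2, _⟩; omega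
        rw [hD, ncard_tail_mem, hJ, Set.ncard_insert_of_notMem hnotmem (Jset_finite n c'),
          ih c', pow_succ]
        ring
      · have hD : Dset (n+1) c =
            {d : Clan (n+1) | d 0 = false ∧ (fun i : Fin n => d i.succ) ∈ Dset n c'} := by
          rw [Dset, if_neg (by simp [h0']), if_neg hcond]
        have hJ : Jset (n+1) c = Jset n c' := by
          ext j
          rw [mem_Jset_succ]
          constructor
          · rintro (h | ⟨rfl, h1, h2, _⟩)
            · exact h
            · exact absurd ⟨by omega, h2⟩ hcond
          · exact Or.inl
        rw [hD, ncard_cons_image, hJ, ih c']
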